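/- Suppose x : ℝ → ℝ⁶ satisfies ẋ = A(t)x with A(t) = [[-ω(t)^×, gI₃],[0, -ω(t)^×]], and let φ solve φ' = φω^× with φ(0) = I₃. Then x(t) = T(t)ᵀ exp(Ā(t-s)) T(s) x(s) for all s ≤ t, where T(t) = diag(φ(t),φ(t)) and Ā = [[0,gI₃],[0,0]]. In particular the state transition matrix of the system is Φ(t,s) = T(t)ᵀ exp(Ā(t-s)) T(s). -/

import Mathlib

open Matrix

def skew (u : Fin 3 → ℝ) : Matrix (Fin 3) (Fin 3) ℝ :=
  !![0, -u 2, u 1; u 2, 0, -u 0; -u 1, u 0, 0]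

/-- The system matrix `A(t) = [[-ω(t)^×, gI₃],[0, -ω(t)^×]]`. -/
def Amat (g : ℝ) (ω : ℝ → Fin 3 → ℝ) (t : ℝ) :
    Matrix (Fin 3 ⊕ Fin 3) (Fin 3 ⊕ Fin 3) ℝ :=
  Matrix.fromBlocks (-skew (ω t)) (g • (1 : Matrix (Fin 3) (Fin 3) ℝ))
    0 (-skew (ω t))

/-- `Ā = [[0, gI₃],[0,0]]`. -/
def Abar (g : ℝ) : Matrix (Fin 3 ⊕ Fin 3) (Fin 3 ⊕ Fin 3) ℝ :=
  Matrix.fromBlocks 0 (g • (1 : Matrix (Fin 3) (Fin 3) ℝ)) 0 0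

/-- `T(t) = diag(φ(t), φ(t))`. -/
def Tmat (φ : ℝ → Matrix (Fin 3) (Fin 3) ℝ) (t : ℝ) :
    Matrix (Fin 3 ⊕ Fin 3) (Fin 3 ⊕ Fin 3) ℝ :=
  Matrix.fromBlocks (φ t) 0 0 (φ t)

/-- The transition matrix `Φ(t,s) = T(t)ᵀ exp(Ā(t-s)) T(s)`. -/
noncomputable def Phi (g : ℝ) (φ : ℝ → Matrix (Fin 3) (Fin 3) ℝ) (t s : ℝ) :
    Matrix (Fin 3 ⊕ Fin 3) (Fin 3 ⊕ Fin 3) ℝ :=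
  (Tmat φ t)ᵀ * NormedSpace.exp ((t - s) • Abar g) * Tmat φ s

open Set
lemma skew_transpose (u : Fin 3 → ℝ) : (skew u)ᵀ = -skew u := by
  ext i j; fin_cases i <;> fin_cases j <;> simp [skew]

lemma skew_entry_abs (u : Fin 3 → ℝ) (i j : Fin 3) : |skew u i j| ≤ ‖u‖ := by
  have h0 : (0:ℝ) ≤ ‖u‖ := norm_nonneg u
  have h : ∀ k, |u k| ≤ ‖u‖ := fun k => by
    simpa [Real.norm_eq_abs] using norm_le_pi_norm u k
  fin_cases i <;> fin_cases j <;> simp [skew, abs_neg] <;> first | exact h0 | exact h _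

lemma hasDerivAt_entries {f : ℝ → Fin 3 → Fin 3 → ℝ} {f' : Fin 3 → Fin 3 → ℝ} {t : ℝ}
    (h : ∀ i j, HasDerivAt (fun s => f s i j) (f' i j) t) : HasDerivAt f f' t :=
  hasDerivAt_pi.2 fun i => hasDerivAt_pi.2 fun j => h i j

-- entry bound for products, pi sup norm on Fin 3 → Fin 3 → ℝ
lemma mul_entry_abs (M N : Matrix (Fin 3) (Fin 3) ℝ) (c d : ℝ)
    (hM : ∀ i j, |M i j| ≤ c) (hN : ∀ i j, |N i j| ≤ d) (hc : 0 ≤ c) (hd : 0 ≤ d)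
    (i j : Fin 3) : |(M * N) i j| ≤ 3 * (c * d) := by
  have : |(M * N) i j| ≤ ∑ k : Fin 3, |M i k * N k j| := by
    rw [Matrix.mul_apply]; exact Finset.abs_sum_le_sum_abs _ _
  refine this.trans ?_
  have : ∀ k : Fin 3, |M i k * N k j| ≤ c * d := fun k => by
    rw [abs_mul]; exact mul_le_mul (hM i k) (hN k j) (abs_nonneg _) hc
  calc (∑ k : Fin 3, |M i k * N k j|) ≤ ∑ _k : Fin 3, c * d := Finset.sum_le_sum fun k _ => this k
    _ = 3 * (c * d) := by simp [Finset.sum_const, Finset.card_univ]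

lemma exp_nilpotent {A : Type*} [Ring A] [Algebra ℝ A] [TopologicalSpace A]
    [IsTopologicalRing A] [T2Space A] (x : A) (h : x * x = 0) :
    NormedSpace.exp x = 1 + x := by
  rw [NormedSpace.exp_eq_tsum ℝ]
  have hzero : ∀ n ∉ ({0, 1} : Finset ℕ), ((n.factorial : ℝ))⁻¹ • x ^ n = 0 := by
    intro n hn
    simp only [Finset.mem_insert, Finset.mem_singleton] at hn
    have hx : x ^ n = 0 := by
      have e : x ^ n = x * x * x ^ (n - 2) := by
        rw [← pow_two, ← pow_add]; congr 1; omega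
      rw [e, h, zero_mul]
    rw [hx, smul_zero]
  beta_reduce
  rw [tsum_eq_sum hzero]
  rw [Finset.sum_pair (by norm_num : (0:ℕ) ≠ 1)]
  simp

lemma Abar_sq (g : ℝ) : Abar g * Abar g = 0 := by
  simp [Abar, Matrix.fromBlocks_multiply]

lemma exp_smul_Abar (g a : ℝ) :
    NormedSpace.exp (a • Abar g) = 1 + a • Abar g := by
  apply exp_nilpotent
  rw [smul_mul_smul_comm, Abar_sq, smul_zero]

-- entrywise derivative of r ↦ ((φ r)ᵀ * φ r) i j
lemma hasDerivAt_gram (ω : ℝ → Fin 3 → ℝ) (φ : ℝ → Matrix (Fin 3) (Fin 3) ℝ)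
    (hφ : ∀ t : ℝ, ∀ i j : Fin 3,
      HasDerivAt (fun s => φ s i j) ((φ t * skew (ω t)) i j) t) (t : ℝ) :
    HasDerivAt (fun r => (fun i j => ((φ r)ᵀ * φ r) i j))
      (fun i j => (((φ t)ᵀ * φ t) * skew (ω t) - skew (ω t) * ((φ t)ᵀ * φ t)) i j) t := by
  apply hasDerivAt_entries
  intro i j
  have key : HasDerivAt (fun r => ∑ k : Fin 3, φ r k i * φ r k j)
      (∑ k : Fin 3, ((φ t * skew (ω t)) k i * φ t k j + φ t k i * (φ t * skew (ω t)) k j)) t :=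
    HasDerivAt.fun_sum fun k _ => (hφ t k i).mul (hφ t k j)
  have e1 : (fun r => ((φ r)ᵀ * φ r) i j) = fun r => ∑ k : Fin 3, φ r k i * φ r k j := by
    funext r; simp [Matrix.mul_apply]
  have e2 : (((φ t)ᵀ * φ t) * skew (ω t) - skew (ω t) * ((φ t)ᵀ * φ t)) i j
      = ∑ k : Fin 3, ((φ t * skew (ω t)) k i * φ t k j + φ t k i * (φ t * skew (ω t)) k j) := by
    have : ((φ t)ᵀ * φ t) * skew (ω t) - skew (ω t) * ((φ t)ᵀ * φ t)
        = (φ t * skew (ω t))ᵀ * φ t + (φ t)ᵀ * (φ t * skew (ω t)) := by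
      rw [transpose_mul, skew_transpose]
      rw [Matrix.mul_assoc, ← Matrix.mul_assoc]
      noncomm_ring
    rw [this]
    simp [Matrix.mul_apply, Finset.sum_add_distrib, mul_comm]
  rw [e2]; exact e1 ▸ key

lemma ortho (ω : ℝ → Fin 3 → ℝ) (hω : Continuous ω)
    (φ : ℝ → Matrix (Fin 3) (Fin 3) ℝ)
    (hφ : ∀ t : ℝ, ∀ i j : Fin 3,
      HasDerivAt (fun s => φ s i j) ((φ t * skew (ω t)) i j) t)
    (hφ0 : φ 0 = 1) (t : ℝ) : (φ t)ᵀ * φ t = 1 := by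
  set b : ℝ := |t| + 1 with hb
  have hbpos : 0 < b := by positivity
  -- bound on ‖ω‖ on [-b, b]
  obtain ⟨c, hc⟩ : ∃ c, ∀ u ∈ Icc (-b) b, ‖ω u‖ ≤ c :=
    (isCompact_Icc).exists_bound_of_continuousOn hω.continuousOn
  have hc0 : 0 ≤ c := le_trans (norm_nonneg _) (hc 0 ⟨by linarith, by linarith⟩)
  -- clamped time
  set π : ℝ → ℝ := fun r => max (-b) (min r b) with hπ
  have hπmem : ∀ r, π r ∈ Icc (-b) b := fun r =>
    ⟨le_max_left _ _, max_le (by linarith) (min_le_right _ _)⟩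
  have hπeq : ∀ r ∈ Ioo (-b) b, π r = r := fun r hr => by
    simp only [hπ]; rw [min_eq_left hr.2.le, max_eq_right hr.1.le]
  set S : ℝ → Matrix (Fin 3) (Fin 3) ℝ := fun r => skew (ω (π r)) with hS
  have hSbound : ∀ r, ∀ i j, |S r i j| ≤ c := fun r i j =>
    (skew_entry_abs _ i j).trans (hc _ (hπmem r))
  -- the vector field
  set v : ℝ → (Fin 3 → Fin 3 → ℝ) → (Fin 3 → Fin 3 → ℝ) :=
    fun r M => Matrix.of.symm (Matrix.of M * S r - S r * Matrix.of M) with hv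
  have hlip : ∀ r, LipschitzOnWith (Real.toNNReal (6 * c)) (v r) univ := by
    intro r
    apply LipschitzOnWith.of_dist_le_mul
    intro M _ N _
    rw [dist_eq_norm]
    have hsub : v r M - v r N
        = Matrix.of.symm ((Matrix.of M - Matrix.of N) * S r - S r * (Matrix.of M - Matrix.of N)) := by
      show Matrix.of.symm (Matrix.of M * S r - S r * Matrix.of M)
          - Matrix.of.symm (Matrix.of N * S r - S r * Matrix.of N) = _
      have h9 : (Matrix.of M * S r - S r * Matrix.of M) - (Matrix.of N * S r - S r * Matrix.of N)
          = (Matrix.of M - Matrix.of N) * S r - S r * (Matrix.of M - Matrix.of N) := by noncomm_ring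
      rw [← h9]; rfl
    rw [hsub]
    have hMN : ∀ i j, |(Matrix.of M - Matrix.of N) i j| ≤ ‖M - N‖ := by
      intro i j
      have h1 : ‖(M - N) i‖ ≤ ‖M - N‖ := norm_le_pi_norm (M - N) i
      have h2 : |(M - N) i j| ≤ ‖(M - N) i‖ := by
        simpa [Real.norm_eq_abs] using norm_le_pi_norm ((M - N) i) j
      exact h2.trans h1
    have hnn : (0:ℝ) ≤ ‖M - N‖ := norm_nonneg _
    rw [Real.coe_toNNReal _ (by positivity)]
    have hd : dist M N = ‖M - N‖ := dist_eq_norm M N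
    rw [hd]
    rw [pi_norm_le_iff_of_nonneg (by positivity)]
    intro i
    rw [pi_norm_le_iff_of_nonneg (by positivity)]
    intro j
    have e1 : |((Matrix.of M - Matrix.of N) * S r) i j| ≤ 3 * (‖M - N‖ * c) :=
      mul_entry_abs _ _ _ _ hMN (hSbound r) hnn hc0 i j
    have e2 : |(S r * (Matrix.of M - Matrix.of N)) i j| ≤ 3 * (c * ‖M - N‖) :=
      mul_entry_abs _ _ _ _ (hSbound r) hMN hc0 hnn i j
    have : |(((Matrix.of M - Matrix.of N) * S r - S r * (Matrix.of M - Matrix.of N)) : Matrix (Fin 3) (Fin 3) ℝ) i j|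
        ≤ 3 * (‖M - N‖ * c) + 3 * (c * ‖M - N‖) := by
      rw [Matrix.sub_apply]
      exact (abs_sub _ _).trans (add_le_add e1 e2)
    calc ‖Matrix.of.symm ((Matrix.of M - Matrix.of N) * S r - S r * (Matrix.of M - Matrix.of N)) i j‖
        = |(((Matrix.of M - Matrix.of N) * S r - S r * (Matrix.of M - Matrix.of N)) : Matrix (Fin 3) (Fin 3) ℝ) i j| := rfl
      _ ≤ 3 * (‖M - N‖ * c) + 3 * (c * ‖M - N‖) := this
      _ ≤ 6 * c * ‖M - N‖ := by nlinarith
  -- solutions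
  set f : ℝ → (Fin 3 → Fin 3 → ℝ) := fun r => (fun i j => ((φ r)ᵀ * φ r) i j) with hf
  set gg : ℝ → (Fin 3 → Fin 3 → ℝ) := fun _ => (fun i j => (1 : Matrix (Fin 3) (Fin 3) ℝ) i j) with hgg
  have hf' : ∀ r ∈ Ioo (-b) b, HasDerivAt f (v r (f r)) r := by
    intro r hr
    have hSr : S r = skew (ω r) := by simp only [hS]; rw [hπeq r hr]
    have hvv : v r (f r)
        = fun i j => (((φ r)ᵀ * φ r) * skew (ω r) - skew (ω r) * ((φ r)ᵀ * φ r)) i j := by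
      simp only [hv, hSr]; rfl
    rw [hvv]; exact hasDerivAt_gram ω φ hφ r
  have hg' : ∀ r ∈ Ioo (-b) b, HasDerivAt gg (v r (gg r)) r := by
    intro r hr
    have h1 : v r (gg r) = 0 := by
      simp only [hv, hgg]
      have : Matrix.of (fun i j => (1 : Matrix (Fin 3) (Fin 3) ℝ) i j) = (1 : Matrix (Fin 3) (Fin 3) ℝ) := rfl
      rw [this, Matrix.one_mul, Matrix.mul_one, sub_self]
      rfl
    rw [h1]; exact hasDerivAt_const r _
  have hcont : ContinuousOn f (Icc (-b) b) := by
    apply Continuous.continuousOn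
    apply continuous_pi; intro i; apply continuous_pi; intro j
    have : ∀ r, HasDerivAt (fun s => f s i j) _ r := fun r => hasDerivAt_pi.1 (hasDerivAt_pi.1 (hasDerivAt_gram ω φ hφ r) i) j
    exact continuous_iff_continuousAt.2 fun r => ((this r).continuousAt)
  have heq0 : f 0 = gg 0 := by
    simp only [hf, hgg, hφ0]
    funext i j
    simp
  have hmem : (0:ℝ) ∈ Ioo (-b) b := ⟨by linarith, by linarith⟩
  have := ODE_solution_unique_of_mem_Icc (v := v) (s := fun _ => univ)
    (fun r _ => hlip r) hmem hcont hf' (fun _ _ => mem_univ _)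
    (continuousOn_const) hg' (fun _ _ => mem_univ _) heq0
  have ht : t ∈ Icc (-b) b := ⟨by cases abs_cases t <;> linarith, by cases abs_cases t <;> linarith⟩
  have := this ht
  ext i j
  have : f t i j = gg t i j := congrFun (congrFun this i) j
  simpa [hf, hgg] using this

lemma Phi_eq (g : ℝ) (φ : ℝ → Matrix (Fin 3) (Fin 3) ℝ) (t s : ℝ) :
    Phi g φ t s = Matrix.fromBlocks ((φ t)ᵀ * φ s) ((t - s) • (g • ((φ t)ᵀ * φ s)))
      0 ((φ t)ᵀ * φ s) := by
  rw [Phi, exp_smul_Abar, Tmat, Tmat, Abar]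
  rw [Matrix.fromBlocks_transpose]
  rw [Matrix.mul_add, Matrix.mul_one]
  rw [Matrix.fromBlocks_smul, Matrix.fromBlocks_multiply]
  rw [Matrix.add_mul, Matrix.fromBlocks_multiply]
  rw [Matrix.fromBlocks_multiply, ← Matrix.fromBlocks_add]
  simp [Matrix.smul_mul]
  ext i j
  cases i <;> cases j <;> simp [Matrix.fromBlocks]


lemma AmulPhi (g : ℝ) (ω : ℝ → Fin 3 → ℝ) (φ : ℝ → Matrix (Fin 3) (Fin 3) ℝ) (t s : ℝ) :
    Amat g ω t * Phi g φ t s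
      = Matrix.fromBlocks (-skew (ω t) * ((φ t)ᵀ * φ s))
          ((t - s) • (g • (-skew (ω t) * ((φ t)ᵀ * φ s))) + g • ((φ t)ᵀ * φ s))
          0 (-skew (ω t) * ((φ t)ᵀ * φ s)) := by
  rw [Phi_eq, Amat, Matrix.fromBlocks_multiply]
  have h1 : -skew (ω t) * ((t - s) • (g • ((φ t)ᵀ * φ s)))
        + g • (1 : Matrix (Fin 3) (Fin 3) ℝ) * ((φ t)ᵀ * φ s)
      = (t - s) • (g • (-skew (ω t) * ((φ t)ᵀ * φ s))) + g • ((φ t)ᵀ * φ s) := by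
    rw [Matrix.mul_smul, Matrix.mul_smul, Matrix.smul_mul, Matrix.one_mul]
  rw [← h1]
  simp

lemma hasDerivAt_P (ω : ℝ → Fin 3 → ℝ) (φ : ℝ → Matrix (Fin 3) (Fin 3) ℝ)
    (hφ : ∀ t : ℝ, ∀ i j : Fin 3,
      HasDerivAt (fun s => φ s i j) ((φ t * skew (ω t)) i j) t)
    (s t : ℝ) (i j : Fin 3) :
    HasDerivAt (fun r => ((φ r)ᵀ * φ s) i j)
      ((-skew (ω t) * ((φ t)ᵀ * φ s)) i j) t := by
  have key : HasDerivAt (fun r => ∑ k : Fin 3, φ r k i * φ s k j)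
      (∑ k : Fin 3, (φ t * skew (ω t)) k i * φ s k j) t :=
    HasDerivAt.fun_sum fun k _ => (hφ t k i).mul_const (φ s k j)
  have e1 : (fun r => ((φ r)ᵀ * φ s) i j) = fun r => ∑ k : Fin 3, φ r k i * φ s k j := by
    funext r; simp [Matrix.mul_apply]
  have e2 : (-skew (ω t) * ((φ t)ᵀ * φ s)) i j
      = ∑ k : Fin 3, (φ t * skew (ω t)) k i * φ s k j := by
    have : -skew (ω t) * ((φ t)ᵀ * φ s) = (φ t * skew (ω t))ᵀ * φ s := by
      rw [transpose_mul, skew_transpose]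
      simp [Matrix.neg_mul, Matrix.mul_assoc]
    rw [this]
    simp only [Matrix.mul_apply, Matrix.transpose_apply]
  rw [e2]; exact e1 ▸ key

lemma part2 (g : ℝ) (ω : ℝ → Fin 3 → ℝ) (φ : ℝ → Matrix (Fin 3) (Fin 3) ℝ)
    (hφ : ∀ t : ℝ, ∀ i j : Fin 3,
      HasDerivAt (fun s => φ s i j) ((φ t * skew (ω t)) i j) t)
    (s t : ℝ) (i j : Fin 3 ⊕ Fin 3) :
    HasDerivAt (fun r => Phi g φ r s i j) ((Amat g ω t * Phi g φ t s) i j) t := by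
  rw [AmulPhi]
  simp only [Phi_eq]
  cases i with
  | inl i => cases j with
    | inl j =>
      simpa [Matrix.fromBlocks] using hasDerivAt_P ω φ hφ s t i j
    | inr j =>
      simp only [Matrix.fromBlocks, of_apply, Sum.elim_inl, Sum.elim_inr,
        Matrix.add_apply, Matrix.smul_apply, smul_eq_mul]
      have h := ((hasDerivAt_id t).sub_const s).fun_mul ((hasDerivAt_P ω φ hφ s t i j).const_mul g)
      refine h.congr_deriv ?_
      simp only [id_eq]
      ring
  | inr i => cases j with
    | inl j =>
      simpa [Matrix.fromBlocks] using hasDerivAt_const t (0:ℝ)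
    | inr j =>
      simpa [Matrix.fromBlocks] using hasDerivAt_P ω φ hφ s t i j

lemma key_sum (ψ χ : Matrix (Fin 3) (Fin 3) ℝ) (w : Fin 3 → ℝ) (i : Fin 3) :
    ∑ k : Fin 3, ψ k i * (∑ l : Fin 3, χ k l * w l)
      = ∑ l : Fin 3, (ψᵀ * χ) i l * w l := by
  simp only [Matrix.mul_apply, Matrix.transpose_apply, Finset.mul_sum, Finset.sum_mul]
  rw [Finset.sum_comm]
  exact Finset.sum_congr rfl fun l _ => Finset.sum_congr rfl fun k _ => by ring

-- mulVec components of Amat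
lemma hA1 (g : ℝ) (ω : ℝ → Fin 3 → ℝ) (x : ℝ → (Fin 3 ⊕ Fin 3) → ℝ) (r : ℝ) (k : Fin 3) :
    (Amat g ω r *ᵥ x r) (Sum.inl k)
      = (∑ l : Fin 3, (-skew (ω r)) k l * x r (Sum.inl l)) + g * x r (Sum.inr k) := by
  simp [Amat, Matrix.mulVec, dotProduct, Fintype.sum_sum_type, Matrix.fromBlocks,
    Matrix.one_apply, Finset.mul_sum, mul_ite, Finset.sum_ite_eq']

lemma hA2 (g : ℝ) (ω : ℝ → Fin 3 → ℝ) (x : ℝ → (Fin 3 ⊕ Fin 3) → ℝ) (r : ℝ) (k : Fin 3) :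
    (Amat g ω r *ᵥ x r) (Sum.inr k)
      = ∑ l : Fin 3, (-skew (ω r)) k l * x r (Sum.inr l) := by
  simp [Amat, Matrix.mulVec, dotProduct, Fintype.sum_sum_type, Matrix.fromBlocks]

lemma part1 (g : ℝ) (ω : ℝ → Fin 3 → ℝ) (φ : ℝ → Matrix (Fin 3) (Fin 3) ℝ)
    (hφ : ∀ t : ℝ, ∀ i j : Fin 3,
      HasDerivAt (fun s => φ s i j) ((φ t * skew (ω t)) i j) t)
    (hOrtho : ∀ t, (φ t)ᵀ * φ t = 1)
    (x : ℝ → (Fin 3 ⊕ Fin 3) → ℝ)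
    (hx : ∀ t : ℝ, ∀ i : Fin 3 ⊕ Fin 3,
      HasDerivAt (fun s => x s i) ((Amat g ω t *ᵥ x t) i) t)
    (s t : ℝ) : x t = Phi g φ t s *ᵥ x s := by
  set y1 : ℝ → Fin 3 → ℝ := fun r i => ∑ k : Fin 3, φ r i k * x r (Sum.inl k) with hy1
  set y2 : ℝ → Fin 3 → ℝ := fun r i => ∑ k : Fin 3, φ r i k * x r (Sum.inr k) with hy2
  -- y2 has zero derivative
  have hy2' : ∀ r : ℝ, ∀ i : Fin 3, HasDerivAt (fun u => y2 u i) 0 r := by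
    intro r i
    have key : HasDerivAt (fun u => y2 u i)
        (∑ k : Fin 3, ((φ r * skew (ω r)) i k * x r (Sum.inr k)
          + φ r i k * ((Amat g ω r *ᵥ x r) (Sum.inr k)))) r := by
      apply HasDerivAt.fun_sum
      intro k _
      exact (hφ r i k).mul (hx r (Sum.inr k))
    convert key using 1
    symm
    have : ∀ k : Fin 3, (Amat g ω r *ᵥ x r) (Sum.inr k)
        = ∑ l : Fin 3, (-skew (ω r)) k l * x r (Sum.inr l) := hA2 g ω x r
    simp only [this]
    rw [Finset.sum_add_distrib]
    have e1 : ∑ k : Fin 3, φ r i k * (∑ l : Fin 3, (-skew (ω r)) k l * x r (Sum.inr l))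
        = ∑ l : Fin 3, (φ r * (-skew (ω r))) i l * x r (Sum.inr l) := by
      simp only [Matrix.mul_apply, Finset.mul_sum, Finset.sum_mul]
      rw [Finset.sum_comm]
      exact Finset.sum_congr rfl fun l _ => Finset.sum_congr rfl fun k _ => by ring
    rw [e1]
    have e2 : ∑ k : Fin 3, (φ r * skew (ω r)) i k * x r (Sum.inr k)
        + ∑ l : Fin 3, (φ r * (-skew (ω r))) i l * x r (Sum.inr l) = 0 := by
      rw [Matrix.mul_neg]
      simp only [Matrix.neg_apply, neg_mul]
      rw [Finset.sum_neg_distrib]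
      ring
    rw [e2]
  -- y2 is constant
  have hy2c : ∀ r : ℝ, ∀ i : Fin 3, y2 r i = y2 s i := by
    intro r i
    exact is_const_of_deriv_eq_zero (fun u => (hy2' u i).differentiableAt)
      (fun u => (hy2' u i).deriv) r s
  -- y1 has derivative g * y2 s i
  have hy1' : ∀ r : ℝ, ∀ i : Fin 3, HasDerivAt (fun u => y1 u i) (g * y2 s i) r := by
    intro r i
    have key : HasDerivAt (fun u => y1 u i)
        (∑ k : Fin 3, ((φ r * skew (ω r)) i k * x r (Sum.inl k)
          + φ r i k * ((Amat g ω r *ᵥ x r) (Sum.inl k)))) r := by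
      apply HasDerivAt.fun_sum
      intro k _
      exact (hφ r i k).mul (hx r (Sum.inl k))
    convert key using 1
    symm
    have : ∀ k : Fin 3, (Amat g ω r *ᵥ x r) (Sum.inl k)
        = (∑ l : Fin 3, (-skew (ω r)) k l * x r (Sum.inl l)) + g * x r (Sum.inr k) :=
      hA1 g ω x r
    simp only [this, mul_add, Finset.sum_add_distrib]
    have e1 : ∑ k : Fin 3, φ r i k * (∑ l : Fin 3, (-skew (ω r)) k l * x r (Sum.inl l))
        = ∑ l : Fin 3, (φ r * (-skew (ω r))) i l * x r (Sum.inl l) := by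
      simp only [Matrix.mul_apply, Finset.mul_sum, Finset.sum_mul]
      rw [Finset.sum_comm]
      exact Finset.sum_congr rfl fun l _ => Finset.sum_congr rfl fun k _ => by ring
    rw [e1]
    have e2 : ∑ k : Fin 3, φ r i k * (g * x r (Sum.inr k)) = g * y2 r i := by
      rw [hy2, Finset.mul_sum]
      exact Finset.sum_congr rfl fun k _ => by ring
    rw [e2, hy2c r i]
    have e3 : ∑ k : Fin 3, (φ r * skew (ω r)) i k * x r (Sum.inl k)
        + ∑ l : Fin 3, (φ r * (-skew (ω r))) i l * x r (Sum.inl l) = 0 := by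
      rw [Matrix.mul_neg]
      simp only [Matrix.neg_apply, neg_mul]
      rw [Finset.sum_neg_distrib]
      ring
    linarith [e3]
  -- integrate: y1 t i = y1 s i + (t - s) * (g * y2 s i)
  have hy1c : ∀ i : Fin 3, y1 t i = y1 s i + (t - s) * (g * y2 s i) := by
    intro i
    have hz : ∀ u : ℝ, HasDerivAt (fun u => y1 u i - u * (g * y2 s i)) 0 u := by
      intro u
      have := (hy1' u i).fun_sub ((hasDerivAt_id u).mul_const (g * y2 s i))
      simpa using this
    have := is_const_of_deriv_eq_zero (fun u => (hz u).differentiableAt)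
      (fun u => (hz u).deriv) t s
    linarith [this]
  -- orthogonality consequences
  have hOrtho' : ∀ r : ℝ, ∀ v : Fin 3 → ℝ, ∀ i : Fin 3,
      ∑ k : Fin 3, φ r k i * (∑ l : Fin 3, φ r k l * v l) = v i := by
    intro r v i
    rw [key_sum, hOrtho r]
    simp [Matrix.one_apply]
  -- final assembly
  funext p
  rw [Phi_eq]
  cases p with
  | inl i =>
    have expand : (Matrix.fromBlocks ((φ t)ᵀ * φ s) ((t - s) • (g • ((φ t)ᵀ * φ s)))
        0 ((φ t)ᵀ * φ s) *ᵥ x s) (Sum.inl i)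
        = (∑ l : Fin 3, ((φ t)ᵀ * φ s) i l * x s (Sum.inl l))
          + (t - s) * (g * ∑ l : Fin 3, ((φ t)ᵀ * φ s) i l * x s (Sum.inr l)) := by
      simp [Matrix.mulVec, dotProduct, Fintype.sum_sum_type, Matrix.fromBlocks,
        Finset.mul_sum]
      exact Finset.sum_congr rfl fun l _ => by ring
    rw [expand]
    have h1 : x t (Sum.inl i) = ∑ k : Fin 3, φ t k i * y1 t k := by
      rw [hy1]
      exact (hOrtho' t (fun l => x t (Sum.inl l)) i).symm
    rw [h1]
    simp only [hy1c]
    rw [show (∑ k : Fin 3, φ t k i * (y1 s k + (t - s) * (g * y2 s k)))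
        = (∑ k : Fin 3, φ t k i * y1 s k)
          + (t - s) * (g * ∑ k : Fin 3, φ t k i * y2 s k) by
      rw [Finset.mul_sum, Finset.mul_sum, ← Finset.sum_add_distrib]
      exact Finset.sum_congr rfl fun k _ => by ring]
    congr 1
    · rw [hy1]; exact key_sum (φ t) (φ s) _ i
    · congr 2
      rw [hy2]; exact key_sum (φ t) (φ s) _ i
  | inr i =>
    have expand : (Matrix.fromBlocks ((φ t)ᵀ * φ s) ((t - s) • (g • ((φ t)ᵀ * φ s)))
        0 ((φ t)ᵀ * φ s) *ᵥ x s) (Sum.inr i)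
        = ∑ l : Fin 3, ((φ t)ᵀ * φ s) i l * x s (Sum.inr l) := by
      simp [Matrix.mulVec, dotProduct, Fintype.sum_sum_type, Matrix.fromBlocks]
    rw [expand]
    have h1 : x t (Sum.inr i) = ∑ k : Fin 3, φ t k i * y2 t k := by
      rw [hy2]
      exact (hOrtho' t (fun l => x t (Sum.inr l)) i).symm
    rw [h1]
    simp only [hy2c]
    rw [hy2]
    exact key_sum (φ t) (φ s) _ i

/-- If `ẋ = A(t)x` and `φ' = φω^×`, `φ(0) = I₃`, then
`x(t) = T(t)ᵀ exp(Ā(t-s)) T(s) x(s)` for all `s ≤ t`; in particular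
`Φ(t,s) = T(t)ᵀ exp(Ā(t-s)) T(s)` is the state transition matrix:
`∂ₜΦ(t,s) = A(t)Φ(t,s)` and `Φ(s,s) = I₆`. -/
theorem transition_matrix_formula (g : ℝ) (ω : ℝ → Fin 3 → ℝ) (hω : Continuous ω)
    (φ : ℝ → Matrix (Fin 3) (Fin 3) ℝ)
    (hφ : ∀ t : ℝ, ∀ i j : Fin 3,
      HasDerivAt (fun s => φ s i j) ((φ t * skew (ω t)) i j) t)
    (hφ0 : φ 0 = 1)
    (x : ℝ → (Fin 3 ⊕ Fin 3) → ℝ)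
    (hx : ∀ t : ℝ, ∀ i : Fin 3 ⊕ Fin 3,
      HasDerivAt (fun s => x s i) ((Amat g ω t *ᵥ x t) i) t) :
    (∀ s t : ℝ, s ≤ t → x t = Phi g φ t s *ᵥ x s) ∧
    (∀ s t : ℝ, ∀ i j : Fin 3 ⊕ Fin 3,
      HasDerivAt (fun r => Phi g φ r s i j) ((Amat g ω t * Phi g φ t s) i j) t) ∧
    (∀ s : ℝ, Phi g φ s s = 1) := by
  have hOrtho : ∀ t, (φ t)ᵀ * φ t = 1 := ortho ω hω φ hφ hφ0
  refine ⟨fun s t _ => part1 g ω φ hφ hOrtho x hx s t,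
    fun s t i j => part2 g ω φ hφ s t i j, fun s => ?_⟩
  rw [Phi_eq, hOrtho s, sub_self, zero_smul]
  exact Matrix.fromBlocks_one
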